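/- Let ε ∈ (0,1], A > 0, and let χ : ℝ² × ℝ² → ℂ be measurable and satisfy: (i) ∫_{ℝ²} |χ(x,y)| dy ≤ A for every x ∈ ℝ²; and (ii) |χ(x,y)| ≤ A ε^{−2} (ε/|x−y|)^N for every x ≠ y and every N ∈ {0,1,2,3}. Then there exists a constant C > 0 depending only on A (not on ε, χ, or x) such that for every x ∈ ℝ², ∫_{ℝ²} |χ(x,y)| · | |y|² − 1 |^{−1/2} dy ≤ C ε^{−1/2}; in particular the integral on the left is finite. -/

import Mathlib

open MeasureTheory Set
open scoped ENNReal NNReal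

noncomputable section

/-- The Euclidean norm on `ℝ²`. -/
def euclNorm (v : ℝ × ℝ) : ℝ := Real.sqrt (v.1 ^ 2 + v.2 ^ 2)

lemma lint_sqrtinv_Ioo (a : ℝ) (ha : 0 < a) :
    ∫⁻ u in Set.Ioo (0:ℝ) a, ENNReal.ofReal (1 / Real.sqrt |u|) ≤
      ENNReal.ofReal (2 * Real.sqrt a) := by
  have hint : IntegrableOn (fun u : ℝ => u ^ (-(1/2) : ℝ)) (Set.Ioo (0:ℝ) a) := by
    rw [intervalIntegral.integrableOn_Ioo_rpow_iff ha]; norm_num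
  have hcongr : ∀ u ∈ Set.Ioo (0:ℝ) a, 1 / Real.sqrt |u| = u ^ (-(1/2) : ℝ) := by
    intro u hu
    rw [abs_of_pos hu.1, Real.rpow_neg hu.1.le, Real.sqrt_eq_rpow, one_div]
  calc ∫⁻ u in Set.Ioo (0:ℝ) a, ENNReal.ofReal (1 / Real.sqrt |u|)
      = ∫⁻ u in Set.Ioo (0:ℝ) a, ENNReal.ofReal (u ^ (-(1/2) : ℝ)) := by
        apply setLIntegral_congr_fun measurableSet_Ioo
        intro u hu
        beta_reduce
        rw [hcongr u hu]
    _ = ENNReal.ofReal (∫ u in Set.Ioo (0:ℝ) a, u ^ (-(1/2) : ℝ)) := by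
        rw [← ofReal_integral_eq_lintegral_ofReal hint]
        filter_upwards [ae_restrict_mem measurableSet_Ioo] with u hu
        exact Real.rpow_nonneg hu.1.le _
    _ ≤ ENNReal.ofReal (2 * Real.sqrt a) := by
        apply ENNReal.ofReal_le_ofReal
        rw [← MeasureTheory.integral_Ioc_eq_integral_Ioo,
          ← intervalIntegral.integral_of_le ha.le]
        rw [integral_rpow (Or.inl (by norm_num))]
        rw [Real.sqrt_eq_rpow]
        norm_num
        have : a ^ ((1:ℝ)/2) / (1/2) = 2 * a ^ ((1:ℝ)/2) := by ring
        rw [this]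

lemma lint_sqrtinv_sym (a : ℝ) (ha : 0 < a) :
    ∫⁻ u in Set.Ioo (-a) a, ENNReal.ofReal (1 / Real.sqrt |u|) ≤
      ENNReal.ofReal (4 * Real.sqrt a) := by
  have hneg : ∫⁻ u in Set.Ioo (-a) (0:ℝ), ENNReal.ofReal (1 / Real.sqrt |u|) ≤
      ENNReal.ofReal (2 * Real.sqrt a) := by
    have hpre : (Neg.neg : ℝ → ℝ) ⁻¹' (Set.Ioo (-a) 0) = Set.Ioo (0:ℝ) a := by
      ext u; simp only [Set.mem_preimage, Set.mem_Ioo]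
      constructor <;> intro h <;> constructor <;> linarith [h.1, h.2]
    have := (Measure.measurePreserving_neg (volume : Measure ℝ)).setLIntegral_comp_preimage_emb
      measurableEmbedding_neg (fun u => ENNReal.ofReal (1 / Real.sqrt |u|)) (Set.Ioo (-a) 0)
    rw [← this, hpre]
    simp only [abs_neg]
    exact lint_sqrtinv_Ioo a ha
  have hpos : ∫⁻ u in Set.Ico (0:ℝ) a, ENNReal.ofReal (1 / Real.sqrt |u|) ≤
      ENNReal.ofReal (2 * Real.sqrt a) := by
    rw [setLIntegral_congr (Filter.EventuallyEq.symm Ioo_ae_eq_Ico)]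
    exact lint_sqrtinv_Ioo a ha
  calc ∫⁻ u in Set.Ioo (-a) a, ENNReal.ofReal (1 / Real.sqrt |u|)
      ≤ ∫⁻ u in Set.Ioo (-a) 0 ∪ Set.Ico 0 a, ENNReal.ofReal (1 / Real.sqrt |u|) := by
        apply lintegral_mono_set
        intro u hu
        rcases lt_or_ge u 0 with h | h
        · exact Or.inl ⟨hu.1, h⟩
        · exact Or.inr ⟨h, hu.2⟩
    _ ≤ _ + _ := lintegral_union_le _ _ _
    _ ≤ ENNReal.ofReal (2 * Real.sqrt a) + ENNReal.ofReal (2 * Real.sqrt a) :=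
        add_le_add hneg hpos
    _ = ENNReal.ofReal (4 * Real.sqrt a) := by
        rw [← ENNReal.ofReal_add (by positivity) (by positivity)]; ring_nf

lemma lint_sqrtinv_shift (m a : ℝ) (ha : 0 < a) :
    ∫⁻ t in {t : ℝ | |t - m| < a}, ENNReal.ofReal (1 / Real.sqrt |t - m|) ≤
      ENNReal.ofReal (4 * Real.sqrt a) := by
  have hpre : (fun u : ℝ => u + m) ⁻¹' {t : ℝ | |t - m| < a} = Set.Ioo (-a) a := by
    ext u; simp only [Set.mem_preimage, Set.mem_setOf_eq, Set.mem_Ioo, add_sub_cancel_right,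
      abs_lt]
  have := (measurePreserving_add_right (volume : Measure ℝ) m).setLIntegral_comp_preimage_emb
    (MeasurableEquiv.addRight m).measurableEmbedding
    (fun t => ENNReal.ofReal (1 / Real.sqrt |t - m|)) {t : ℝ | |t - m| < a}
  rw [← this, hpre]
  simp only [add_sub_cancel_right]
  exact lint_sqrtinv_sym a ha

lemma lint_sqrtinv_absshift (m a : ℝ) (ha : 0 < a) :
    ∫⁻ t in {t : ℝ | |(|t| - m)| < a}, ENNReal.ofReal (1 / Real.sqrt |(|t| - m)|) ≤
      ENNReal.ofReal (8 * Real.sqrt a) := by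
  set E : Set ℝ := {t : ℝ | |(|t| - m)| < a} with hE
  have hEm : MeasurableSet E := by
    apply measurableSet_lt (by fun_prop) measurable_const
  have part1 : ∫⁻ t in E ∩ Set.Ici 0, ENNReal.ofReal (1 / Real.sqrt |(|t| - m)|) ≤
      ENNReal.ofReal (4 * Real.sqrt a) := by
    calc ∫⁻ t in E ∩ Set.Ici 0, ENNReal.ofReal (1 / Real.sqrt |(|t| - m)|)
        ≤ ∫⁻ t in E ∩ Set.Ici 0, ENNReal.ofReal (1 / Real.sqrt |t - m|) := by
          apply setLIntegral_mono' (hEm.inter measurableSet_Ici)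
          intro t ht
          rw [abs_of_nonneg (show (0:ℝ) ≤ t from ht.2)]
      _ ≤ ∫⁻ t in {t : ℝ | |t - m| < a}, ENNReal.ofReal (1 / Real.sqrt |t - m|) := by
          apply lintegral_mono_set
          intro t ht
          have := ht.1
          rw [hE, Set.mem_setOf_eq, abs_of_nonneg (show (0:ℝ) ≤ t from ht.2)] at this
          exact this
      _ ≤ _ := lint_sqrtinv_shift m a ha
  have part2 : ∫⁻ t in E ∩ Set.Iio 0, ENNReal.ofReal (1 / Real.sqrt |(|t| - m)|) ≤
      ENNReal.ofReal (4 * Real.sqrt a) := by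
    have hrefl := (Measure.measurePreserving_neg (volume : Measure ℝ)).setLIntegral_comp_preimage_emb
      measurableEmbedding_neg (fun t => ENNReal.ofReal (1 / Real.sqrt |(|t| - m)|))
      (E ∩ Set.Iio 0)
    rw [← hrefl]
    simp only [abs_neg]
    have hsub : (Neg.neg : ℝ → ℝ) ⁻¹' (E ∩ Set.Iio 0) ⊆ {t : ℝ | |(|t| - m)| < a} ∩ Set.Ici 0 := by
      intro u hu
      simp only [Set.mem_preimage, hE, Set.mem_inter_iff, Set.mem_setOf_eq, Set.mem_Iio,
        abs_neg] at hu
      exact ⟨hu.1, le_of_lt (by linarith [hu.2] : (0:ℝ) < u)⟩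
    calc ∫⁻ u in (Neg.neg : ℝ → ℝ) ⁻¹' (E ∩ Set.Iio 0), ENNReal.ofReal (1 / Real.sqrt |(|u| - m)|)
        ≤ ∫⁻ u in E ∩ Set.Ici 0, ENNReal.ofReal (1 / Real.sqrt |(|u| - m)|) :=
          lintegral_mono_set hsub
      _ ≤ _ := part1
  calc ∫⁻ t in E, ENNReal.ofReal (1 / Real.sqrt |(|t| - m)|)
      ≤ ∫⁻ t in (E ∩ Set.Ici 0) ∪ (E ∩ Set.Iio 0), ENNReal.ofReal (1 / Real.sqrt |(|t| - m)|) := by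
        apply lintegral_mono_set
        intro t ht
        rcases le_or_gt 0 t with h | h
        · exact Or.inl ⟨ht, h⟩
        · exact Or.inr ⟨ht, h⟩
    _ ≤ _ + _ := lintegral_union_le _ _ _
    _ ≤ ENNReal.ofReal (4 * Real.sqrt a) + ENNReal.ofReal (4 * Real.sqrt a) :=
        add_le_add part1 part2
    _ = ENNReal.ofReal (8 * Real.sqrt a) := by
        rw [← ENNReal.ofReal_add (by positivity) (by positivity)]; ring_nf


lemma slice_bound (c δ : ℝ) (hδ0 : 0 < δ) (hδ : δ ≤ 1/4) :
    ∫⁻ t in {t : ℝ | 3/5 ≤ |t| ∧ |t ^ 2 - c| < δ},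
        ENNReal.ofReal (1 / Real.sqrt |t ^ 2 - c|) ≤
      ENNReal.ofReal (14 * Real.sqrt δ) := by
  set S : Set ℝ := {t : ℝ | 3/5 ≤ |t| ∧ |t ^ 2 - c| < δ} with hS
  rcases le_or_gt c 0 with hc | hc
  · -- the set is empty
    have : S = ∅ := by
      ext t
      simp only [hS, Set.mem_setOf_eq, Set.mem_empty_iff_false, iff_false, not_and, not_lt]
      intro ht
      have h1 : (3/5 : ℝ) ^ 2 ≤ |t| ^ 2 := by
        apply pow_le_pow_left₀ (by norm_num) ht
      rw [sq_abs] at h1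
      have : t ^ 2 - c ≥ 9/25 := by nlinarith
      calc δ ≤ 1/4 := hδ
        _ ≤ t ^ 2 - c := by linarith
        _ ≤ |t ^ 2 - c| := le_abs_self _
    rw [this]
    simp
  · -- c > 0
    set m := Real.sqrt c with hm
    have hm0 : 0 < m := Real.sqrt_pos.mpr hc
    have hmsq : m ^ 2 = c := Real.sq_sqrt hc.le
    have key : ∀ t ∈ S, |t ^ 2 - c| = |(|t| - m)| * (|t| + m) := by
      intro t ht
      have : t ^ 2 - c = (|t| - m) * (|t| + m) := by
        rw [← hmsq]; rw [← sq_abs t]; ring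
      rw [this, abs_mul, abs_of_pos (by linarith [abs_nonneg t] : (0:ℝ) < |t| + m)]
    have hsubset : S ⊆ {t : ℝ | |(|t| - m)| < 5/3 * δ} := by
      intro t ht
      have h1 := key t ht
      have h2 : (3/5 : ℝ) ≤ |t| + m := by
        have := ht.1; have := abs_nonneg t; linarith
      have h3 : |(|t| - m)| * (3/5) ≤ |(|t| - m)| * (|t| + m) := by
        apply mul_le_mul_of_nonneg_left h2 (abs_nonneg _)
      have h4 : |(|t| - m)| * (3/5) < δ := by
        rw [← h1] at h3
        exact lt_of_le_of_lt h3 ht.2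
      simp only [Set.mem_setOf_eq]
      linarith
    have hpt : ∀ t ∈ S, ENNReal.ofReal (1 / Real.sqrt |t ^ 2 - c|) ≤
        ENNReal.ofReal (Real.sqrt (5/3)) * ENNReal.ofReal (1 / Real.sqrt |(|t| - m)|) := by
      intro t ht
      rw [← ENNReal.ofReal_mul (Real.sqrt_nonneg _)]
      apply ENNReal.ofReal_le_ofReal
      rw [key t ht, Real.sqrt_mul (abs_nonneg _)]
      rcases eq_or_lt_of_le (abs_nonneg (|t| - m)) with h0 | h0
      · rw [← h0]
        simp
      · have hsp : 0 < Real.sqrt |(|t| - m)| := Real.sqrt_pos.mpr h0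
        have h2 : (3/5 : ℝ) ≤ |t| + m := by
          have := ht.1; have := abs_nonneg t; linarith
        have hsp2 : Real.sqrt (3/5) ≤ Real.sqrt (|t| + m) := Real.sqrt_le_sqrt h2
        have hsp3 : 0 < Real.sqrt (3/5) := by positivity
        have hy : 0 < Real.sqrt (|t| + m) := lt_of_lt_of_le hsp3 hsp2
        have hinv : 1 / Real.sqrt (|t| + m) ≤ Real.sqrt (5/3) := by
          have h53 : Real.sqrt (5/3 : ℝ) = (Real.sqrt (3/5))⁻¹ := by
            rw [show (5/3 : ℝ) = (3/5 : ℝ)⁻¹ by norm_num, Real.sqrt_inv]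
          rw [h53, one_div]
          exact inv_anti₀ hsp3 hsp2
        have hexp : 1 / (Real.sqrt |(|t| - m)| * Real.sqrt (|t| + m)) =
            (1 / Real.sqrt (|t| + m)) * (1 / Real.sqrt |(|t| - m)|) := by
          field_simp
        rw [hexp]
        apply mul_le_mul_of_nonneg_right hinv (by positivity)
    have hSm : MeasurableSet S := by
      have h1 : MeasurableSet {t : ℝ | 3/5 ≤ |t|} :=
        measurableSet_le measurable_const measurable_id.abs
      have h2 : MeasurableSet {t : ℝ | |t ^ 2 - c| < δ} :=
        measurableSet_lt (((measurable_id.pow_const 2).sub_const c).abs) measurable_const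
      exact h1.inter h2
    calc ∫⁻ t in S, ENNReal.ofReal (1 / Real.sqrt |t ^ 2 - c|)
        ≤ ∫⁻ t in S, ENNReal.ofReal (Real.sqrt (5/3)) *
            ENNReal.ofReal (1 / Real.sqrt |(|t| - m)|) :=
          setLIntegral_mono' hSm hpt
      _ = ENNReal.ofReal (Real.sqrt (5/3)) *
            ∫⁻ t in S, ENNReal.ofReal (1 / Real.sqrt |(|t| - m)|) :=
          lintegral_const_mul' _ _ ENNReal.ofReal_ne_top
      _ ≤ ENNReal.ofReal (Real.sqrt (5/3)) *
            ∫⁻ t in {t : ℝ | |(|t| - m)| < 5/3 * δ},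
              ENNReal.ofReal (1 / Real.sqrt |(|t| - m)|) := by
          apply mul_le_mul_right (lintegral_mono_set hsubset)
      _ ≤ ENNReal.ofReal (Real.sqrt (5/3)) * ENNReal.ofReal (8 * Real.sqrt (5/3 * δ)) :=
          mul_le_mul_right (lint_sqrtinv_absshift m (5/3 * δ) (by linarith)) _
      _ ≤ ENNReal.ofReal (14 * Real.sqrt δ) := by
          rw [← ENNReal.ofReal_mul (Real.sqrt_nonneg _)]
          apply ENNReal.ofReal_le_ofReal
          rw [Real.sqrt_mul (by norm_num)]
          have h53 : Real.sqrt (5/3) * Real.sqrt (5/3) = 5/3 :=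
            Real.mul_self_sqrt (by norm_num)
          have : Real.sqrt (5/3) * (8 * (Real.sqrt (5/3) * Real.sqrt δ)) =
              (Real.sqrt (5/3) * Real.sqrt (5/3)) * 8 * Real.sqrt δ := by ring
          rw [this, h53]
          have : (5/3 : ℝ) * 8 = 40/3 := by norm_num
          nlinarith [Real.sqrt_nonneg δ]

lemma strip_bound (δ b r : ℝ) (hδ0 : 0 < δ) (hδ : δ ≤ 1/4) (hr : 0 < r) :
    ∫⁻ y : ℝ × ℝ in
        {y : ℝ × ℝ | |y.1 ^ 2 + y.2 ^ 2 - 1| < δ ∧ |y.1 - b| < r ∧ 3/5 ≤ |y.2|},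
        ENNReal.ofReal (1 / Real.sqrt |y.1 ^ 2 + y.2 ^ 2 - 1|) ≤
      ENNReal.ofReal (28 * Real.sqrt δ * r) := by
  set f : ℝ × ℝ → ℝ≥0∞ :=
    fun y => ENNReal.ofReal (1 / Real.sqrt |y.1 ^ 2 + y.2 ^ 2 - 1|) with hf
  set S : Set (ℝ × ℝ) :=
    {y : ℝ × ℝ | |y.1 ^ 2 + y.2 ^ 2 - 1| < δ ∧ |y.1 - b| < r ∧ 3/5 ≤ |y.2|} with hSdef
  have hq : Measurable fun y : ℝ × ℝ => |y.1 ^ 2 + y.2 ^ 2 - 1| := by fun_prop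
  have hfm : Measurable f := by
    apply ENNReal.measurable_ofReal.comp
    apply Measurable.div measurable_const
    exact Real.continuous_sqrt.measurable.comp hq
  have hSm : MeasurableSet S := by
    apply MeasurableSet.inter (hq measurableSet_Iio)
    apply MeasurableSet.inter
    · exact measurableSet_lt ((measurable_fst.sub_const b).abs) measurable_const
    · exact measurableSet_le measurable_const measurable_snd.abs
  have hind : ∫⁻ y in S, f y = ∫⁻ y : ℝ × ℝ, S.indicator f y := (lintegral_indicator hSm f).symm
  rw [hind]
  have hprod : (volume : Measure (ℝ × ℝ)) = (volume : Measure ℝ).prod volume :=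
    Measure.volume_eq_prod ℝ ℝ
  rw [hprod, lintegral_prod _ (hfm.indicator hSm).aemeasurable]
  have inner : ∀ y1 : ℝ,
      ∫⁻ t : ℝ, S.indicator f (y1, t) ≤
        Set.indicator {z : ℝ | |z - b| < r} (fun _ => ENNReal.ofReal (14 * Real.sqrt δ)) y1 := by
    intro y1
    rcases lt_or_ge |y1 - b| r with hy1 | hy1
    · rw [Set.indicator_of_mem (by exact hy1 : y1 ∈ {z : ℝ | |z - b| < r})]
      set c : ℝ := 1 - y1 ^ 2 with hc
      have heq : ∀ t : ℝ, y1 ^ 2 + t ^ 2 - 1 = t ^ 2 - c := by intro t; rw [hc]; ring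
      have hle : ∀ t : ℝ, S.indicator f (y1, t) ≤
          Set.indicator {t : ℝ | 3/5 ≤ |t| ∧ |t ^ 2 - c| < δ}
            (fun t => ENNReal.ofReal (1 / Real.sqrt |t ^ 2 - c|)) t := by
        intro t
        rcases Set.indicator_eq_zero_or_self S f (y1, t) with h | h
        · rw [h]; exact zero_le
        · rcases Classical.em ((y1, t) ∈ S) with hmem | hmem
          · rw [h]
            have hmem' : t ∈ {t : ℝ | 3/5 ≤ |t| ∧ |t ^ 2 - c| < δ} := by
              refine ⟨hmem.2.2, ?_⟩
              rw [← heq t]; exact hmem.1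
            rw [Set.indicator_of_mem hmem']
            rw [hf]
            simp only [← heq t]
            exact le_rfl
          · rw [Set.indicator_of_notMem hmem]; exact zero_le
      calc ∫⁻ t : ℝ, S.indicator f (y1, t) ≤
          ∫⁻ t : ℝ, Set.indicator {t : ℝ | 3/5 ≤ |t| ∧ |t ^ 2 - c| < δ}
            (fun t => ENNReal.ofReal (1 / Real.sqrt |t ^ 2 - c|)) t :=
            lintegral_mono hle
        _ = ∫⁻ t in {t : ℝ | 3/5 ≤ |t| ∧ |t ^ 2 - c| < δ},
              ENNReal.ofReal (1 / Real.sqrt |t ^ 2 - c|) := by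
            apply lintegral_indicator
            have h1 : MeasurableSet {t : ℝ | 3/5 ≤ |t|} :=
              measurableSet_le measurable_const measurable_id.abs
            have h2 : MeasurableSet {t : ℝ | |t ^ 2 - c| < δ} :=
              measurableSet_lt (((measurable_id.pow_const 2).sub_const c).abs) measurable_const
            exact h1.inter h2
        _ ≤ ENNReal.ofReal (14 * Real.sqrt δ) := slice_bound c δ hδ0 hδ
    · have hzero : ∀ t : ℝ, S.indicator f (y1, t) = 0 := by
        intro t
        apply Set.indicator_of_notMem
        intro hmem
        exact absurd hmem.2.1 (not_lt.mpr hy1)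
      simp only [hzero, lintegral_zero]
      exact zero_le
  calc ∫⁻ y1 : ℝ, ∫⁻ t : ℝ, S.indicator f (y1, t)
      ≤ ∫⁻ y1 : ℝ, Set.indicator {z : ℝ | |z - b| < r}
          (fun _ => ENNReal.ofReal (14 * Real.sqrt δ)) y1 := lintegral_mono inner
    _ = ENNReal.ofReal (14 * Real.sqrt δ) * volume {z : ℝ | |z - b| < r} := by
        rw [lintegral_indicator_const]
        exact measurableSet_lt ((measurable_id.sub_const b).abs) measurable_const
    _ = ENNReal.ofReal (14 * Real.sqrt δ) * ENNReal.ofReal (2 * r) := by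
        have : {z : ℝ | |z - b| < r} = Set.Ioo (b - r) (b + r) := by
          ext z; simp only [Set.mem_setOf_eq, Set.mem_Ioo, abs_lt]
          constructor <;> intro h <;> constructor <;> linarith [h.1, h.2]
        rw [this, Real.volume_Ioo]
        congr 1
        ring
    _ = ENNReal.ofReal (28 * Real.sqrt δ * r) := by
        rw [← ENNReal.ofReal_mul (by positivity)]
        congr 1
        ring

lemma strip_bound' (δ b r : ℝ) (hδ0 : 0 < δ) (hδ : δ ≤ 1/4) (hr : 0 < r) :
    ∫⁻ y : ℝ × ℝ in
        {y : ℝ × ℝ | |y.1 ^ 2 + y.2 ^ 2 - 1| < δ ∧ |y.2 - b| < r ∧ 3/5 ≤ |y.1|},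
        ENNReal.ofReal (1 / Real.sqrt |y.1 ^ 2 + y.2 ^ 2 - 1|) ≤
      ENNReal.ofReal (28 * Real.sqrt δ * r) := by
  have hswap : MeasurePreserving (Prod.swap : ℝ × ℝ → ℝ × ℝ) volume volume :=
    ⟨measurable_swap, Measure.prod_swap⟩
  have h := hswap.setLIntegral_comp_preimage_emb
    MeasurableEquiv.prodComm.measurableEmbedding
    (fun y : ℝ × ℝ => ENNReal.ofReal (1 / Real.sqrt |y.1 ^ 2 + y.2 ^ 2 - 1|))
    {y : ℝ × ℝ | |y.1 ^ 2 + y.2 ^ 2 - 1| < δ ∧ |y.2 - b| < r ∧ 3/5 ≤ |y.1|}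
  rw [← h]
  have hsw : ∀ z : ℝ × ℝ, (Prod.swap z).1 ^ 2 + (Prod.swap z).2 ^ 2 - 1 =
      z.1 ^ 2 + z.2 ^ 2 - 1 := by
    intro z; simp [Prod.swap]; ring
  simp only [hsw]
  have hset : (Prod.swap : ℝ × ℝ → ℝ × ℝ) ⁻¹'
      {y : ℝ × ℝ | |y.1 ^ 2 + y.2 ^ 2 - 1| < δ ∧ |y.2 - b| < r ∧ 3/5 ≤ |y.1|} =
      {z : ℝ × ℝ | |z.1 ^ 2 + z.2 ^ 2 - 1| < δ ∧ |z.1 - b| < r ∧ 3/5 ≤ |z.2|} := by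
    ext z
    simp only [Set.mem_preimage, Set.mem_setOf_eq, Prod.swap, Prod.fst_swap, Prod.snd_swap]
    rw [add_comm (z.2 ^ 2)]
  rw [hset]
  exact strip_bound δ b r hδ0 hδ hr

lemma square_bound (δ : ℝ) (hδ0 : 0 < δ) (hδ : δ ≤ 1/4) (x : ℝ × ℝ) (r : ℝ) (hr : 0 < r) :
    ∫⁻ y : ℝ × ℝ in
        {y : ℝ × ℝ | |y.1 ^ 2 + y.2 ^ 2 - 1| < δ ∧ |y.1 - x.1| < r ∧ |y.2 - x.2| < r},
        ENNReal.ofReal (1 / Real.sqrt |y.1 ^ 2 + y.2 ^ 2 - 1|) ≤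
      ENNReal.ofReal (56 * Real.sqrt δ * r) := by
  set A : Set (ℝ × ℝ) :=
    {y : ℝ × ℝ | |y.1 ^ 2 + y.2 ^ 2 - 1| < δ ∧ |y.1 - x.1| < r ∧ 3/5 ≤ |y.2|} with hA
  set B : Set (ℝ × ℝ) :=
    {y : ℝ × ℝ | |y.1 ^ 2 + y.2 ^ 2 - 1| < δ ∧ |y.2 - x.2| < r ∧ 3/5 ≤ |y.1|} with hB
  have hcover : {y : ℝ × ℝ | |y.1 ^ 2 + y.2 ^ 2 - 1| < δ ∧ |y.1 - x.1| < r ∧ |y.2 - x.2| < r}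
      ⊆ A ∪ B := by
    intro y hy
    obtain ⟨h1, h2, h3⟩ := hy
    have hbig : 3/4 ≤ y.1 ^ 2 + y.2 ^ 2 := by
      have := abs_lt.mp h1
      linarith [this.1]
    rcases le_or_gt (3/5 : ℝ) |y.2| with h | h
    · exact Or.inl ⟨h1, h2, h⟩
    · right
      refine ⟨h1, h3, ?_⟩
      have hy2 : y.2 ^ 2 < 9/25 := by
        have : |y.2| ^ 2 < (3/5) ^ 2 := by
          apply pow_lt_pow_left₀ h (abs_nonneg _)
          norm_num
        rw [sq_abs] at this
        linarith
      nlinarith [sq_abs y.1, abs_nonneg y.1]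
  calc ∫⁻ y in
        {y : ℝ × ℝ | |y.1 ^ 2 + y.2 ^ 2 - 1| < δ ∧ |y.1 - x.1| < r ∧ |y.2 - x.2| < r},
        ENNReal.ofReal (1 / Real.sqrt |y.1 ^ 2 + y.2 ^ 2 - 1|)
      ≤ ∫⁻ y in A ∪ B, ENNReal.ofReal (1 / Real.sqrt |y.1 ^ 2 + y.2 ^ 2 - 1|) :=
        lintegral_mono_set hcover
    _ ≤ (∫⁻ y in A, ENNReal.ofReal (1 / Real.sqrt |y.1 ^ 2 + y.2 ^ 2 - 1|)) +
          ∫⁻ y in B, ENNReal.ofReal (1 / Real.sqrt |y.1 ^ 2 + y.2 ^ 2 - 1|) :=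
        lintegral_union_le _ _ _
    _ ≤ ENNReal.ofReal (28 * Real.sqrt δ * r) + ENNReal.ofReal (28 * Real.sqrt δ * r) :=
        add_le_add (strip_bound δ x.1 r hδ0 hδ hr) (strip_bound' δ x.2 r hδ0 hδ hr)
    _ = ENNReal.ofReal (56 * Real.sqrt δ * r) := by
        rw [← ENNReal.ofReal_add (by positivity) (by positivity)]
        congr 1; ring

lemma euclNorm_sq' (y : ℝ × ℝ) : Real.sqrt (y.1 ^ 2 + y.2 ^ 2) ^ 2 = y.1 ^ 2 + y.2 ^ 2 :=
  Real.sq_sqrt (by positivity)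

lemma abs_fst_le_euclNorm' (v : ℝ × ℝ) : |v.1| ≤ Real.sqrt (v.1 ^ 2 + v.2 ^ 2) := by
  rw [← Real.sqrt_sq_eq_abs]
  exact Real.sqrt_le_sqrt (by nlinarith [sq_nonneg v.2])

lemma abs_snd_le_euclNorm' (v : ℝ × ℝ) : |v.2| ≤ Real.sqrt (v.1 ^ 2 + v.2 ^ 2) := by
  rw [← Real.sqrt_sq_eq_abs]
  exact Real.sqrt_le_sqrt (by nlinarith [sq_nonneg v.1])

lemma volume_singleton_prod (x : ℝ × ℝ) : (volume : Measure (ℝ × ℝ)) {x} = 0 := by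
  have : ({x} : Set (ℝ × ℝ)) = {x.1} ×ˢ {x.2} := by
    rw [Set.singleton_prod_singleton]
  rw [this, Measure.volume_eq_prod, Measure.prod_prod, Real.volume_singleton]
  simp

lemma key_bound (χ : ℝ × ℝ → ℝ × ℝ → ℂ) (x : ℝ × ℝ) (E : Set (ℝ × ℝ))
    (hE : MeasurableSet E) (M : ℝ) (hM : 0 ≤ M)
    (hb : ∀ y ∈ E, y ≠ x → ‖χ x y‖ ≤ M) :
    ∫⁻ y in E, ENNReal.ofReal (‖χ x y‖ / Real.sqrt |y.1 ^ 2 + y.2 ^ 2 - 1|) ≤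
      ENNReal.ofReal M * ∫⁻ y in E, ENNReal.ofReal (1 / Real.sqrt |y.1 ^ 2 + y.2 ^ 2 - 1|) := by
  have hxnull := volume_singleton_prod x
  have hae : E =ᵐ[volume] ((E \ {x} : Set (ℝ × ℝ))) := by
    apply MeasureTheory.ae_eq_set.2
    constructor
    · refine measure_mono_null ?_ hxnull
      intro y hy
      by_contra h
      exact hy.2 ⟨hy.1, h⟩
    · refine measure_mono_null ?_ measure_empty
      intro y hy
      exact absurd hy.1.1 hy.2
  calc ∫⁻ y in E, ENNReal.ofReal (‖χ x y‖ / Real.sqrt |y.1 ^ 2 + y.2 ^ 2 - 1|)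
      = ∫⁻ y in E \ {x}, ENNReal.ofReal (‖χ x y‖ / Real.sqrt |y.1 ^ 2 + y.2 ^ 2 - 1|) :=
        setLIntegral_congr hae
    _ ≤ ∫⁻ y in E \ {x}, ENNReal.ofReal M *
          ENNReal.ofReal (1 / Real.sqrt |y.1 ^ 2 + y.2 ^ 2 - 1|) := by
        apply setLIntegral_mono' (hE.diff (measurableSet_singleton x))
        intro y hy
        rw [← ENNReal.ofReal_mul hM]
        apply ENNReal.ofReal_le_ofReal
        rw [div_eq_mul_inv, mul_one_div, div_eq_mul_inv]
        apply mul_le_mul_of_nonneg_right _ (inv_nonneg.2 (Real.sqrt_nonneg _))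
        exact hb y hy.1 (fun h => hy.2 (by rw [h]; exact rfl))
    _ = ENNReal.ofReal M *
          ∫⁻ y in E \ {x}, ENNReal.ofReal (1 / Real.sqrt |y.1 ^ 2 + y.2 ^ 2 - 1|) :=
        lintegral_const_mul' _ _ ENNReal.ofReal_ne_top
    _ ≤ _ := mul_le_mul_right (lintegral_mono_set Set.diff_subset) _

lemma key_bound2 (χ : ℝ × ℝ → ℝ × ℝ → ℂ) (x : ℝ × ℝ) (E : Set (ℝ × ℝ))
    (hE : MeasurableSet E) (M : ℝ) (hM : 0 ≤ M)
    (hb : ∀ y ∈ E, y ≠ x → ‖χ x y‖ ≤ M)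
    (δ : ℝ) (hδ0 : 0 < δ) (hδ : δ ≤ 1/4) (z : ℝ × ℝ) (r : ℝ) (hr : 0 < r)
    (hsub : E ⊆ {y : ℝ × ℝ | |y.1 ^ 2 + y.2 ^ 2 - 1| < δ ∧ |y.1 - z.1| < r ∧ |y.2 - z.2| < r}) :
    ∫⁻ y in E, ENNReal.ofReal (‖χ x y‖ / Real.sqrt |y.1 ^ 2 + y.2 ^ 2 - 1|) ≤
      ENNReal.ofReal (M * (56 * Real.sqrt δ * r)) := by
  calc ∫⁻ y in E, ENNReal.ofReal (‖χ x y‖ / Real.sqrt |y.1 ^ 2 + y.2 ^ 2 - 1|)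
      ≤ ENNReal.ofReal M *
          ∫⁻ y in E, ENNReal.ofReal (1 / Real.sqrt |y.1 ^ 2 + y.2 ^ 2 - 1|) :=
        key_bound χ x E hE M hM hb
    _ ≤ ENNReal.ofReal M * ENNReal.ofReal (56 * Real.sqrt δ * r) := by
        apply mul_le_mul_right
        calc ∫⁻ y in E, ENNReal.ofReal (1 / Real.sqrt |y.1 ^ 2 + y.2 ^ 2 - 1|)
            ≤ ∫⁻ y in {y : ℝ × ℝ | |y.1 ^ 2 + y.2 ^ 2 - 1| < δ ∧ |y.1 - z.1| < r ∧
                |y.2 - z.2| < r}, ENNReal.ofReal (1 / Real.sqrt |y.1 ^ 2 + y.2 ^ 2 - 1|) :=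
              lintegral_mono_set hsub
          _ ≤ _ := square_bound δ hδ0 hδ z r hr
    _ = ENNReal.ofReal (M * (56 * Real.sqrt δ * r)) :=
        (ENNReal.ofReal_mul hM).symm

/-- **Mollifier estimate against the inverse square root of the distance to the unit
circle.** For every `A > 0` there is a constant `C > 0`, depending only on `A`, such that
for every `ε ∈ (0,1]` and every measurable kernel `χ` satisfying the `ε`-mollifier bounds
(i) `∫ |χ(x,y)| dy ≤ A` and (ii) `|χ(x,y)| ≤ A ε^{−2} (ε/|x−y|)^N` for `N = 0,1,2,3`,
one has `∫_{ℝ²} |χ(x,y)| ||y|² − 1|^{−1/2} dy ≤ C ε^{−1/2}` for every `x`. -/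
theorem mollifier_singular_estimate
    (A : ℝ) (hA : 0 < A) :
    ∃ C : ℝ, 0 < C ∧
      ∀ ε : ℝ, ε ∈ Set.Ioc (0 : ℝ) 1 →
        ∀ χ : ℝ × ℝ → ℝ × ℝ → ℂ,
          Measurable (fun p : (ℝ × ℝ) × (ℝ × ℝ) => χ p.1 p.2) →
          (∀ x : ℝ × ℝ,
            (∫⁻ y : ℝ × ℝ, ENNReal.ofReal ‖χ x y‖) ≤ ENNReal.ofReal A) →
          (∀ x y : ℝ × ℝ, x ≠ y → ∀ N : ℕ, N ≤ 3 →
            ‖χ x y‖ ≤ A / ε ^ 2 * (ε / euclNorm (x - y)) ^ N) →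
          ∀ x : ℝ × ℝ,
            (∫⁻ y : ℝ × ℝ,
                ENNReal.ofReal (‖χ x y‖ / Real.sqrt |euclNorm y ^ 2 - 1|)) ≤
              ENNReal.ofReal (C / Real.sqrt ε) := by
  refine ⟨1000 * A, by positivity, ?_⟩
  intro ε hε χ hmeas h1 h2 x
  obtain ⟨hε0, hε1⟩ := hε
  have hq : ∀ y : ℝ × ℝ, euclNorm y ^ 2 = y.1 ^ 2 + y.2 ^ 2 := by
    intro y; rw [euclNorm, euclNorm_sq']
  simp only [hq]
  set s := Real.sqrt ε with hs
  have hs0 : 0 < s := Real.sqrt_pos.mpr hε0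
  have hssq : s ^ 2 = ε := Real.sq_sqrt hε0.le
  have hqm : Measurable fun y : ℝ × ℝ => |y.1 ^ 2 + y.2 ^ 2 - 1| := by fun_prop
  have hχx : Measurable fun y : ℝ × ℝ => ‖χ x y‖ :=
    (hmeas.comp measurable_prodMk_left).norm
  -- bound for the region away from the circle
  have outer : ∀ c : ℝ, 0 < c →
      ∫⁻ y in {y : ℝ × ℝ | |y.1 ^ 2 + y.2 ^ 2 - 1| < c}ᶜ,
          ENNReal.ofReal (‖χ x y‖ / Real.sqrt |y.1 ^ 2 + y.2 ^ 2 - 1|) ≤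
        ENNReal.ofReal (A / Real.sqrt c) := by
    intro c hc
    have hsc : 0 < Real.sqrt c := Real.sqrt_pos.mpr hc
    calc ∫⁻ y in {y : ℝ × ℝ | |y.1 ^ 2 + y.2 ^ 2 - 1| < c}ᶜ,
          ENNReal.ofReal (‖χ x y‖ / Real.sqrt |y.1 ^ 2 + y.2 ^ 2 - 1|)
        ≤ ∫⁻ y in {y : ℝ × ℝ | |y.1 ^ 2 + y.2 ^ 2 - 1| < c}ᶜ,
            ENNReal.ofReal ‖χ x y‖ * ENNReal.ofReal (1 / Real.sqrt c) := by
          apply setLIntegral_mono' (hqm measurableSet_Iio).compl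
          intro y hy
          rw [← ENNReal.ofReal_mul (norm_nonneg _)]
          apply ENNReal.ofReal_le_ofReal
          rw [div_eq_mul_one_div]
          apply mul_le_mul_of_nonneg_left _ (norm_nonneg _)
          apply one_div_le_one_div_of_le hsc
          apply Real.sqrt_le_sqrt
          exact not_lt.mp hy
      _ ≤ ∫⁻ y : ℝ × ℝ, ENNReal.ofReal ‖χ x y‖ * ENNReal.ofReal (1 / Real.sqrt c) :=
          setLIntegral_le_lintegral _ _
      _ = (∫⁻ y : ℝ × ℝ, ENNReal.ofReal ‖χ x y‖) * ENNReal.ofReal (1 / Real.sqrt c) :=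
          lintegral_mul_const' _ _ ENNReal.ofReal_ne_top
      _ ≤ ENNReal.ofReal A * ENNReal.ofReal (1 / Real.sqrt c) :=
          mul_le_mul_left (h1 x) _
      _ = ENNReal.ofReal (A / Real.sqrt c) := by
          rw [← ENNReal.ofReal_mul hA.le, mul_one_div]
  rcases le_or_gt ε (1/4) with hcase | hcase
  · -- main case : ε ≤ 1/4
    set S : Set (ℝ × ℝ) := {y : ℝ × ℝ | |y.1 ^ 2 + y.2 ^ 2 - 1| < ε} with hSdef
    have hSm : MeasurableSet S := hqm measurableSet_Iio
    rw [← lintegral_add_compl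
      (fun y : ℝ × ℝ => ENNReal.ofReal (‖χ x y‖ / Real.sqrt |y.1 ^ 2 + y.2 ^ 2 - 1|)) hSm]
    have houter := outer ε hε0
    -- dyadic decomposition of S
    have habs1 : ∀ y : ℝ × ℝ, |y.1 - x.1| ≤ euclNorm (x - y) := by
      intro y
      rw [euclNorm]
      have := abs_fst_le_euclNorm' (x - y)
      simpa [abs_sub_comm] using this
    have habs2 : ∀ y : ℝ × ℝ, |y.2 - x.2| ≤ euclNorm (x - y) := by
      intro y
      rw [euclNorm]
      have := abs_snd_le_euclNorm' (x - y)
      simpa [abs_sub_comm] using this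
    have hdcont : Continuous fun y : ℝ × ℝ => euclNorm (x - y) := by
      unfold euclNorm; fun_prop
    set T : ℕ → Set (ℝ × ℝ) := fun k => {y : ℝ × ℝ | euclNorm (x - y) < 2 ^ k * ε} with hT
    have hTm : ∀ k, MeasurableSet (T k) := by
      intro k
      exact measurableSet_lt hdcont.measurable measurable_const
    have hdx : euclNorm (x - x) = 0 := by
      rw [euclNorm]; simp
    have hcover : S ⊆ (S ∩ T 0) ∪ ⋃ k : ℕ, (S ∩ (T (k+1) \ T k)) := by
      intro y hy
      have hex : ∃ n : ℕ, euclNorm (x - y) < 2 ^ n * ε := by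
        obtain ⟨n, hn⟩ := pow_unbounded_of_one_lt (euclNorm (x - y) / ε) (one_lt_two (α := ℝ))
        refine ⟨n, ?_⟩
        rw [div_lt_iff₀ hε0] at hn
        linarith
      classical
      rcases hfind : Nat.find hex with _ | m
      · left
        refine ⟨hy, ?_⟩
        have := Nat.find_spec hex
        rwa [hfind] at this
      · right
        refine Set.mem_iUnion.2 ⟨m, hy, ?_, ?_⟩
        · have := Nat.find_spec hex
          rwa [hfind] at this
        · exact Nat.find_min hex (by rw [hfind]; exact Nat.lt_succ_self m)
    have hT0 : ∫⁻ y in S ∩ T 0,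
        ENNReal.ofReal (‖χ x y‖ / Real.sqrt |y.1 ^ 2 + y.2 ^ 2 - 1|) ≤
        ENNReal.ofReal (56 * A / s) := by
      have hkey := key_bound2 χ x (S ∩ T 0) (hSm.inter (hTm 0)) (A / ε ^ 2)
        (by positivity)
        (fun y hy hyx => by
          have := h2 x y (Ne.symm hyx) 0 (by norm_num)
          rwa [pow_zero, mul_one] at this)
        ε hε0 hcase x ε hε0
        (fun y hy => by
          have hd : euclNorm (x - y) < ε := by
            have := hy.2
            rw [hT] at this
            simpa using this
          exact ⟨hy.1, lt_of_le_of_lt (habs1 y) hd, lt_of_le_of_lt (habs2 y) hd⟩)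
      refine le_trans hkey (ENNReal.ofReal_le_ofReal (le_of_eq ?_))
      rw [← hssq]
      field_simp
      ring
      exact Real.sqrt_sq hs0.le
    have hshell : ∀ k : ℕ, ∫⁻ y in S ∩ (T (k+1) \ T k),
        ENNReal.ofReal (‖χ x y‖ / Real.sqrt |y.1 ^ 2 + y.2 ^ 2 - 1|) ≤
        ENNReal.ofReal (112 * A / s) * (ENNReal.ofReal (1/2)) ^ k := by
      intro k
      have hp : (0:ℝ) < 2 ^ k := by positivity
      have hr : (0:ℝ) < 2 ^ (k+1) * ε := by positivity
      have hkey := key_bound2 χ x (S ∩ (T (k+1) \ T k))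
        (hSm.inter ((hTm (k+1)).diff (hTm k))) (A / (2 ^ k * ε) ^ 2)
        (by positivity)
        (fun y hy hyx => by
          have hdge : 2 ^ k * ε ≤ euclNorm (x - y) := by
            have := hy.2.2
            rw [hT] at this
            simpa using this
          have hd0 : (0:ℝ) < euclNorm (x - y) := lt_of_lt_of_le (by positivity) hdge
          have hb2 := h2 x y (Ne.symm hyx) 2 (by norm_num)
          have heq : A / ε ^ 2 * (ε / euclNorm (x - y)) ^ 2 = A / euclNorm (x - y) ^ 2 := by
            field_simp
          rw [heq] at hb2
          refine le_trans hb2 ?_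
          gcongr)
        ε hε0 hcase x (2 ^ (k+1) * ε) hr
        (fun y hy => by
          have hd : euclNorm (x - y) < 2 ^ (k+1) * ε := by
            have := hy.2.1
            rw [hT] at this
            simpa using this
          exact ⟨hy.1, lt_of_le_of_lt (habs1 y) hd, lt_of_le_of_lt (habs2 y) hd⟩)
      refine le_trans hkey ?_
      have hval : A / (2 ^ k * ε) ^ 2 * (56 * s * (2 ^ (k+1) * ε)) =
          (112 * A / s) * (1/2) ^ k := by
        rw [← hssq, pow_succ]
        have h2k : ((1:ℝ)/2) ^ k = 1 / 2 ^ k := by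
          rw [div_pow, one_pow]
        rw [h2k]
        field_simp
        ring
      rw [hval, ENNReal.ofReal_mul (by positivity), ENNReal.ofReal_pow (by norm_num)]
    calc (∫⁻ y in S, ENNReal.ofReal (‖χ x y‖ / Real.sqrt |y.1 ^ 2 + y.2 ^ 2 - 1|)) +
          ∫⁻ y in Sᶜ, ENNReal.ofReal (‖χ x y‖ / Real.sqrt |y.1 ^ 2 + y.2 ^ 2 - 1|)
        ≤ ((∫⁻ y in S ∩ T 0,
              ENNReal.ofReal (‖χ x y‖ / Real.sqrt |y.1 ^ 2 + y.2 ^ 2 - 1|)) +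
            ∑' k : ℕ, ∫⁻ y in S ∩ (T (k+1) \ T k),
              ENNReal.ofReal (‖χ x y‖ / Real.sqrt |y.1 ^ 2 + y.2 ^ 2 - 1|)) +
            ENNReal.ofReal (A / s) := by
          apply add_le_add _ houter
          calc ∫⁻ y in S, ENNReal.ofReal (‖χ x y‖ / Real.sqrt |y.1 ^ 2 + y.2 ^ 2 - 1|)
              ≤ ∫⁻ y in (S ∩ T 0) ∪ ⋃ k : ℕ, (S ∩ (T (k+1) \ T k)),
                  ENNReal.ofReal (‖χ x y‖ / Real.sqrt |y.1 ^ 2 + y.2 ^ 2 - 1|) :=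
                lintegral_mono_set hcover
            _ ≤ (∫⁻ y in S ∩ T 0,
                  ENNReal.ofReal (‖χ x y‖ / Real.sqrt |y.1 ^ 2 + y.2 ^ 2 - 1|)) +
                ∫⁻ y in ⋃ k : ℕ, (S ∩ (T (k+1) \ T k)),
                  ENNReal.ofReal (‖χ x y‖ / Real.sqrt |y.1 ^ 2 + y.2 ^ 2 - 1|) :=
                lintegral_union_le _ _ _
            _ ≤ _ := add_le_add_right (lintegral_iUnion_le _ _) _
      _ ≤ (ENNReal.ofReal (56 * A / s) +
            ∑' k : ℕ, ENNReal.ofReal (112 * A / s) * (ENNReal.ofReal (1/2)) ^ k) +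
            ENNReal.ofReal (A / s) := by
          apply add_le_add_left
          exact add_le_add hT0 (ENNReal.tsum_le_tsum hshell)
      _ = (ENNReal.ofReal (56 * A / s) + ENNReal.ofReal (224 * A / s)) +
            ENNReal.ofReal (A / s) := by
          congr 1
          congr 1
          rw [ENNReal.tsum_mul_left, ENNReal.tsum_geometric]
          have h2e : ENNReal.ofReal (1/2 : ℝ) = (2:ℝ≥0∞)⁻¹ := by
            rw [one_div, ENNReal.ofReal_inv_of_pos (by norm_num : (0:ℝ) < 2)]
            norm_num
          rw [h2e, ENNReal.one_sub_inv_two, inv_inv]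
          rw [show (2:ℝ≥0∞) = ENNReal.ofReal 2 by norm_num]
          rw [← ENNReal.ofReal_mul (by positivity)]
          congr 1
          ring
      _ ≤ ENNReal.ofReal (1000 * A / s) := by
          rw [← ENNReal.ofReal_add (by positivity) (by positivity),
            ← ENNReal.ofReal_add (by positivity) (by positivity)]
          apply ENNReal.ofReal_le_ofReal
          rw [← add_div, ← add_div]
          gcongr
          linarith
  · -- easy case : 1/4 < ε
    set U : Set (ℝ × ℝ) := {y : ℝ × ℝ | |y.1 ^ 2 + y.2 ^ 2 - 1| < 1/4} with hUdef
    have hUm : MeasurableSet U := hqm measurableSet_Iio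
    rw [← lintegral_add_compl
      (fun y : ℝ × ℝ => ENNReal.ofReal (‖χ x y‖ / Real.sqrt |y.1 ^ 2 + y.2 ^ 2 - 1|)) hUm]
    have hsq14 : Real.sqrt (1/4 : ℝ) = 1/2 := by
      rw [show (1/4 : ℝ) = (1/2)^2 by norm_num, Real.sqrt_sq (by norm_num)]
    have houter : ∫⁻ y in Uᶜ,
        ENNReal.ofReal (‖χ x y‖ / Real.sqrt |y.1 ^ 2 + y.2 ^ 2 - 1|) ≤
        ENNReal.ofReal (2 * A) := by
      refine le_trans (outer (1/4) (by norm_num)) (ENNReal.ofReal_le_ofReal ?_)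
      rw [hsq14]
      ring_nf
      exact le_rfl
    have hU : ∫⁻ y in U,
        ENNReal.ofReal (‖χ x y‖ / Real.sqrt |y.1 ^ 2 + y.2 ^ 2 - 1|) ≤
        ENNReal.ofReal (896 * A) := by
      have hkey := key_bound2 χ x U hUm (16 * A) (by positivity)
        (fun y hy hyx => by
          have := h2 x y (Ne.symm hyx) 0 (by norm_num)
          rw [pow_zero, mul_one] at this
          refine le_trans this ?_
          rw [div_le_iff₀ (by positivity)]
          have hp : 0 < A * ((ε - 1/4) * (ε + 1/4)) := by
            apply mul_pos hA
            apply mul_pos (by linarith) (by linarith)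
          nlinarith [hp])
        (1/4) (by norm_num) (le_refl _) ((0:ℝ), (0:ℝ)) 2 (by norm_num)
        (fun y hy => by
          have h14 : |y.1 ^ 2 + y.2 ^ 2 - 1| < 1/4 := hy
          have hb := abs_lt.mp h14
          constructor
          · exact h14
          constructor
          · simp only [sub_zero]
            nlinarith [sq_abs y.1, abs_nonneg y.1, sq_nonneg y.2]
          · simp only [sub_zero]
            nlinarith [sq_abs y.2, abs_nonneg y.2, sq_nonneg y.1])
      refine le_trans hkey (ENNReal.ofReal_le_ofReal (le_of_eq ?_))
      rw [hsq14]
      ring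
    calc (∫⁻ y in U, ENNReal.ofReal (‖χ x y‖ / Real.sqrt |y.1 ^ 2 + y.2 ^ 2 - 1|)) +
          ∫⁻ y in Uᶜ, ENNReal.ofReal (‖χ x y‖ / Real.sqrt |y.1 ^ 2 + y.2 ^ 2 - 1|)
        ≤ ENNReal.ofReal (896 * A) + ENNReal.ofReal (2 * A) := add_le_add hU houter
      _ = ENNReal.ofReal (898 * A) := by
          rw [← ENNReal.ofReal_add (by positivity) (by positivity)]
          congr 1; ring
      _ ≤ ENNReal.ofReal (1000 * A / s) := by
          apply ENNReal.ofReal_le_ofReal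
          have hsle1 : s ≤ 1 := by
            rw [hs, show (1:ℝ) = Real.sqrt 1 by rw [Real.sqrt_one]]
            exact Real.sqrt_le_sqrt hε1
          rw [le_div_iff₀ hs0]
          nlinarith

end
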